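/- The first-order theory R of Robinson–Tarski–Mostowski is locally finitely satisfiable: every finite subset of its axioms has a finite model. -/

import Mathlib

open FirstOrder FirstOrder.Language

/-- Function symbols of the language of arithmetic: 0, S, +, ×. -/
inductive ArithFunc : ℕ → Type
  | zero : ArithFunc 0
  | succ : ArithFunc 1
  | add : ArithFunc 2
  | mul : ArithFunc 2

/-- Relation symbols of the language of arithmetic: ≤. -/
inductive ArithRel : ℕ → Type
  | le : ArithRel 2

/-- The language of arithmetic {0, S, +, ×, ≤}. -/
def LA : FirstOrder.Language := ⟨ArithFunc, ArithRel⟩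

/-- The numeral n̄ = Sⁿ(0). -/
def numTerm {α : Type} : ℕ → LA.Term α
  | 0 => Term.func ArithFunc.zero ![]
  | n + 1 => Term.func ArithFunc.succ ![numTerm n]

/-- The term t + s. -/
def plusT {α : Type} (t s : LA.Term α) : LA.Term α := Term.func ArithFunc.add ![t, s]

/-- The term t × s. -/
def timesT {α : Type} (t s : LA.Term α) : LA.Term α := Term.func ArithFunc.mul ![t, s]

/-- The formula t ≤ s. -/
def leF {α : Type} {n : ℕ} (t s : LA.Term (α ⊕ Fin n)) : LA.BoundedFormula α n :=
  Relations.boundedFormula₂ ArithRel.le t s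

/-- The disjunction x = 0̄ ∨ x = 1̄ ∨ … ∨ x = n̄ (for the bound variable x). -/
def disjEq : ℕ → LA.BoundedFormula Empty 1
  | 0 => Term.bdEqual (&0) (numTerm 0)
  | n + 1 => disjEq n ⊔ Term.bdEqual (&0) (numTerm (n + 1))

/-- The theory R of Robinson–Tarski–Mostowski: for all n, m ∈ ℕ,
n̄ + m̄ = (n+m)‾, n̄ × m̄ = (n·m)‾, n̄ ≠ m̄ for n ≠ m,
∀x (x ≤ n̄ → x = 0̄ ∨ … ∨ x = n̄), and ∀x (x ≤ n̄ ∨ n̄ ≤ x). -/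
def TheoryR : LA.Theory :=
  {σ | ∃ n m : ℕ, σ = Term.bdEqual (plusT (numTerm n) (numTerm m)) (numTerm (n + m))} ∪
  {σ | ∃ n m : ℕ, σ = Term.bdEqual (timesT (numTerm n) (numTerm m)) (numTerm (n * m))} ∪
  {σ | ∃ n m : ℕ, n ≠ m ∧ σ = ∼(Term.bdEqual (numTerm n) (numTerm m))} ∪
  {σ | ∃ n : ℕ, σ = ∀' (leF (&0) (numTerm n) ⟹ disjEq n)} ∪
  {σ | ∃ n : ℕ, σ = ∀' (leF (&0) (numTerm n) ⊔ leF (numTerm n) (&0))}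

def clip (N k : ℕ) : Fin (N+1) := ⟨min k N, by omega⟩

def strucN (N : ℕ) : LA.Structure (Fin (N+1)) where
  funMap := fun {n} f v => match f with
    | .zero => clip N 0
    | .succ => clip N ((v 0).val + 1)
    | .add => clip N ((v 0).val + (v 1).val)
    | .mul => clip N ((v 0).val * (v 1).val)
  RelMap := fun {n} r v => match r with
    | .le => (v 0).val ≤ (v 1).val

attribute [local instance] strucN

lemma realize_numTerm {α : Type} (N : ℕ) (v : α → Fin (N+1)) (k : ℕ) :
    Term.realize v (numTerm k) = clip N k := by
  induction k with
  | zero => simp [numTerm, Term.realize]; rfl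
  | succ k ih =>
      have : (Structure.funMap (L := LA) (M := Fin (N+1)) ArithFunc.succ fun i => Term.realize v (![numTerm k] i)) = clip N ((clip N k).val + 1) := by
        simp [strucN, ih]; rfl
      simp only [numTerm, Term.realize, this]
      simp [clip, Fin.ext_iff]; omega

lemma clip_of_le {N k : ℕ} (h : k ≤ N) : (clip N k).val = k := by simp [clip]; omega

lemma funMap_add (N : ℕ) (a b : Fin (N+1)) :
    Structure.funMap (L := LA) (M := Fin (N+1)) ArithFunc.add ![a, b] = clip N (a.val + b.val) := rfl
lemma funMap_mul (N : ℕ) (a b : Fin (N+1)) :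
    Structure.funMap (L := LA) (M := Fin (N+1)) ArithFunc.mul ![a, b] = clip N (a.val * b.val) := rfl
lemma relMap_le (N : ℕ) (a b : Fin (N+1)) :
    Structure.RelMap (L := LA) (M := Fin (N+1)) ArithRel.le ![a, b] ↔ a.val ≤ b.val := Iff.rfl

lemma realize_disjEq (N n : ℕ) (v : Empty → Fin (N+1)) (xs : Fin 1 → Fin (N+1)) :
    (disjEq n).Realize v xs ↔ ∃ i ≤ n, xs 0 = clip N i := by
  induction n with
  | zero =>
      rw [disjEq, BoundedFormula.realize_bdEqual, realize_numTerm]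
      simp [Term.realize]
  | succ n ih =>
      rw [disjEq, BoundedFormula.realize_sup, ih, BoundedFormula.realize_bdEqual,
        realize_numTerm]
      simp only [Function.comp_apply, Term.realize_var, Sum.elim_inr]
      constructor
      · rintro (⟨i, hi, h⟩ | h)
        · exact ⟨i, by omega, h⟩
        · exact ⟨n+1, le_refl _, h⟩
      · rintro ⟨i, hi, h⟩
        rcases Nat.lt_or_ge i (n+1) with h' | h'
        · exact Or.inl ⟨i, by omega, h⟩
        · have : i = n + 1 := by omega
          exact Or.inr (this ▸ h)

lemma realize_plusT {α : Type} (N : ℕ) (v : α → Fin (N+1)) (t s : LA.Term α) :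
    Term.realize v (plusT t s) = clip N ((Term.realize v t).val + (Term.realize v s).val) := rfl

lemma realize_timesT {α : Type} (N : ℕ) (v : α → Fin (N+1)) (t s : LA.Term α) :
    Term.realize v (timesT t s) = clip N ((Term.realize v t).val * (Term.realize v s).val) := rfl

lemma realize_leF {α : Type} {n : ℕ} (N : ℕ) (v : α → Fin (N+1)) (xs : Fin n → Fin (N+1))
    (t s : LA.Term (α ⊕ Fin n)) :
    (leF t s).Realize v xs ↔
      (Term.realize (Sum.elim v xs) t).val ≤ (Term.realize (Sum.elim v xs) s).val := by
  rw [leF]; exact Iff.rfl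

lemma realize_bvar0 (N : ℕ) (v : Empty → Fin (N+1)) (xs : Fin 1 → Fin (N+1)) :
    Term.realize (L := LA) (Sum.elim v xs) (&0 : LA.Term (Empty ⊕ Fin 1)) = xs 0 := rfl

lemma snoc0 (N : ℕ) (x : Fin (N+1)) :
    (Fin.snoc (n := 0) (α := fun _ => Fin (N+1)) default x) 0 = x := by
  simp [Fin.snoc]

lemma sat_addAx (N n m : ℕ) (h : n + m ≤ N) :
    (Fin (N+1)) ⊨ (Term.bdEqual (plusT (numTerm n) (numTerm m)) (numTerm (n + m)) : LA.Sentence) := by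
  rw [Sentence.Realize, Formula.Realize, BoundedFormula.realize_bdEqual, realize_numTerm,
    realize_plusT, realize_numTerm, realize_numTerm]
  simp only [clip, Fin.ext_iff]; omega

lemma sat_mulAx (N n m : ℕ) (h : n * m ≤ N) :
    (Fin (N+1)) ⊨ (Term.bdEqual (timesT (numTerm n) (numTerm m)) (numTerm (n * m)) : LA.Sentence) := by
  rw [Sentence.Realize, Formula.Realize, BoundedFormula.realize_bdEqual, realize_numTerm,
    realize_timesT, realize_numTerm, realize_numTerm]
  rcases Nat.eq_zero_or_pos n with rfl | hn
  · simp [clip]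
  rcases Nat.eq_zero_or_pos m with rfl | hm
  · simp [clip]
  have h1 : min n N = n := min_eq_left (by nlinarith)
  have h2 : min m N = m := min_eq_left (by nlinarith)
  simp only [clip, h1, h2]

lemma sat_neqAx (N n m : ℕ) (hn : n ≤ N) (hm : m ≤ N) (hnm : n ≠ m) :
    (Fin (N+1)) ⊨ (∼(Term.bdEqual (numTerm n) (numTerm m)) : LA.Sentence) := by
  rw [Sentence.Realize, Formula.Realize, BoundedFormula.realize_not,
    BoundedFormula.realize_bdEqual, realize_numTerm, realize_numTerm]
  simp [clip, Fin.ext_iff]; omega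

lemma sat_leAx (N n : ℕ) :
    (Fin (N+1)) ⊨ (∀' (leF (&0) (numTerm n) ⟹ disjEq n) : LA.Sentence) := by
  rw [Sentence.Realize, Formula.Realize, BoundedFormula.realize_all]
  intro x
  rw [BoundedFormula.realize_imp, realize_leF, realize_numTerm, realize_disjEq]
  rw [realize_bvar0, show (0 : Fin 1) = Fin.last 0 from rfl, Fin.snoc_last]
  intro hle
  refine ⟨x.val, ?_, ?_⟩
  · simp only [clip] at hle; omega
  · simp only [clip, Fin.ext_iff]; omega

lemma sat_totAx (N n : ℕ) :
    (Fin (N+1)) ⊨ (∀' (leF (&0) (numTerm n) ⊔ leF (numTerm n) (&0)) : LA.Sentence) := by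
  rw [Sentence.Realize, Formula.Realize, BoundedFormula.realize_all]
  intro x
  rw [BoundedFormula.realize_sup, realize_leF, realize_leF, realize_numTerm]
  rw [realize_bvar0, show (0 : Fin 1) = Fin.last 0 from rfl, Fin.snoc_last]
  simp only [clip]
  omega

lemma exists_bound (σ : LA.Sentence) (hσ : σ ∈ TheoryR) :
    ∃ B : ℕ, ∀ N, B ≤ N → (Fin (N+1)) ⊨ σ := by
  rcases hσ with ((((⟨n, m, rfl⟩ | ⟨n, m, rfl⟩) | ⟨n, m, hnm, rfl⟩) | ⟨n, rfl⟩) | ⟨n, rfl⟩)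
  · exact ⟨n + m, fun N h => sat_addAx N n m h⟩
  · exact ⟨n * m, fun N h => sat_mulAx N n m h⟩
  · exact ⟨max n m, fun N h => sat_neqAx N n m (by omega) (by omega) hnm⟩
  · exact ⟨0, fun N _ => sat_leAx N n⟩
  · exact ⟨0, fun N _ => sat_totAx N n⟩


/-- The theory R is locally finitely satisfiable: every finite subset of its axioms
has a finite (nonempty) model. -/
theorem theoryR_locally_finitely_satisfiable :
    ∀ T₀ : LA.Theory, T₀ ⊆ TheoryR → T₀.Finite →
      ∃ (M : Type) (inst : LA.Structure M), Finite M ∧ Nonempty M ∧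
        @Theory.Model LA M inst T₀ := by
  intro T₀ hsub hfin
  classical
  choose B hB using fun (σ : LA.Sentence) (hσ : σ ∈ T₀) => exists_bound σ (hsub hσ)
  haveI : Finite T₀ := hfin.to_subtype
  obtain ⟨N, hN⟩ := (Set.finite_range (fun x : T₀ => B x.1 x.2)).bddAbove
  refine ⟨Fin (N+1), strucN N, Finite.of_fintype _, ⟨0⟩, ?_⟩
  refine ⟨fun {σ} hσ => ?_⟩
  exact hB σ hσ N (hN ⟨⟨σ, hσ⟩, rfl⟩)
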